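/- With the setup of the SCF iteration as above, if f(x_{k+1}) = f(x_k), then x_k is itself an eigenvector of H(x_k) corresponding to its largest eigenvalue. -/

import Mathlib

open Matrix BigOperators

/-- The SCF coefficient matrix `H(x) = ∑ i, h_i(xᴴ A_i x) • A_i`. -/
noncomputable def Hmat {n m : ℕ} (A : Fin m → Matrix (Fin n) (Fin n) ℂ)
    (h : Fin m → ℝ → ℝ) (x : Fin n → ℂ) : Matrix (Fin n) (Fin n) ℂ :=
  ∑ i, (h i ((star x ⬝ᵥ (A i).mulVec x).re) : ℂ) • A i

/-- Sum of scaled matrices acting on a vector. -/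
lemma sum_smul_mulVec {n m : ℕ} (c : Fin m → ℂ) (A : Fin m → Matrix (Fin n) (Fin n) ℂ)
    (y : Fin n → ℂ) : (∑ i, c i • A i) *ᵥ y = ∑ i, c i • ((A i) *ᵥ y) := by
  ext j
  simp only [Matrix.mulVec, dotProduct, Finset.sum_apply, Matrix.sum_apply,
    Pi.smul_apply, Matrix.smul_apply, smul_eq_mul, Finset.sum_mul, Finset.mul_sum, mul_assoc]
  exact Finset.sum_comm

lemma dotProduct_sum' {k m : ℕ} (v : Fin k → ℂ) (w : Fin m → Fin k → ℂ) :
    v ⬝ᵥ (∑ i, w i) = ∑ i, v ⬝ᵥ w i := by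
  simp only [dotProduct, Finset.sum_apply, Finset.mul_sum]
  exact Finset.sum_comm

/-- Gradient inequality for a convex differentiable function on ℝ. -/
lemma grad_ineq {φ : ℝ → ℝ} (hc : ConvexOn ℝ Set.univ φ) (hd : Differentiable ℝ φ)
    (a b : ℝ) : deriv φ a * (b - a) ≤ φ b - φ a := by
  rcases lt_trichotomy a b with hab | rfl | hba
  · have h1 := hc.deriv_le_slope (Set.mem_univ a) (Set.mem_univ b) hab (hd a)
    rw [slope_def_field] at h1
    have h2 := mul_le_mul_of_nonneg_right h1 (sub_nonneg.2 hab.le)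
    rwa [div_mul_cancel₀ _ (sub_ne_zero.2 hab.ne')] at h2
  · simp
  · have h1 := hc.slope_le_deriv (Set.mem_univ b) (Set.mem_univ a) hba (hd a)
    rw [slope_def_field] at h1
    have h2 := mul_le_mul_of_nonneg_right h1 (sub_nonneg.2 hba.le)
    rw [div_mul_cancel₀ _ (sub_ne_zero.2 hba.ne')] at h2
    nlinarith [h2]

theorem stmt4 {n m : ℕ}
    (A : Fin m → Matrix (Fin n) (Fin n) ℂ) (hA : ∀ i, (A i).IsHermitian)
    (φ h : Fin m → ℝ → ℝ)
    (hconv : ∀ i, ConvexOn ℝ Set.univ (φ i))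
    (hdiff : ∀ i, Differentiable ℝ (φ i))
    (hder : ∀ i t, deriv (φ i) t = h i t)
    (xk xk1 : Fin n → ℂ)
    (hxk : star xk ⬝ᵥ xk = 1) (hxk1 : star xk1 ⬝ᵥ xk1 = 1)
    (lam : ℝ)
    (heig : (Hmat A h xk).mulVec xk1 = (lam : ℂ) • xk1)
    (hmax : ∀ (μ : ℝ) (y : Fin n → ℂ), y ≠ 0 →
        (Hmat A h xk).mulVec y = (μ : ℂ) • y → μ ≤ lam)
    (heq : ∑ i, φ i ((star xk1 ⬝ᵥ (A i).mulVec xk1).re) =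
      ∑ i, φ i ((star xk ⬝ᵥ (A i).mulVec xk).re)) :
    (Hmat A h xk).mulVec xk = (lam : ℂ) • xk := by
  classical
  set a : Fin m → ℝ := fun i => (star xk ⬝ᵥ (A i).mulVec xk).re with ha
  set b : Fin m → ℝ := fun i => (star xk1 ⬝ᵥ (A i).mulVec xk1).re with hb
  set B : Matrix (Fin n) (Fin n) ℂ := Hmat A h xk with hBdef
  -- B is Hermitian
  have hher : B.IsHermitian := by
    show Bᴴ = B
    rw [hBdef]
    unfold Hmat
    rw [Matrix.conjTranspose_sum]
    refine Finset.sum_congr rfl fun i _ => ?_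
    rw [Matrix.conjTranspose_smul, (hA i).eq]
    congr 1
    simp [Complex.star_def, Complex.conj_ofReal]
  -- quadratic form of B
  have key : ∀ y : Fin n → ℂ,
      star y ⬝ᵥ B *ᵥ y = ∑ i, ((h i (a i) : ℂ)) * (star y ⬝ᵥ (A i) *ᵥ y) := by
    intro y
    rw [hBdef]
    unfold Hmat
    rw [sum_smul_mulVec, dotProduct_sum']
    refine Finset.sum_congr rfl fun i _ => ?_
    rw [dotProduct_smul, smul_eq_mul]
  have hlam : lam = ∑ i, h i (a i) * b i := by
    have h1 : (lam : ℂ) = ∑ i, (h i (a i) : ℂ) * (star xk1 ⬝ᵥ (A i) *ᵥ xk1) := by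
      rw [← key xk1]
      show (lam : ℂ) = star xk1 ⬝ᵥ (Hmat A h xk) *ᵥ xk1
      rw [heig, dotProduct_smul, hxk1, smul_eq_mul, mul_one]
    have h2 := congrArg Complex.re h1
    simpa [Complex.re_sum, Complex.re_ofReal_mul] using h2
  have hrxk : (star xk ⬝ᵥ B *ᵥ xk).re = ∑ i, h i (a i) * a i := by
    have h2 := congrArg Complex.re (key xk)
    simpa [Complex.re_sum, Complex.re_ofReal_mul] using h2
  -- convexity step
  have hsum : ∑ i, h i (a i) * (b i - a i) ≤ 0 := by
    have hle : ∑ i, h i (a i) * (b i - a i) ≤ ∑ i, (φ i (b i) - φ i (a i)) := by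
      refine Finset.sum_le_sum fun i _ => ?_
      have := grad_ineq (hconv i) (hdiff i) (a i) (b i)
      rwa [hder i (a i)] at this
    have h0 : ∑ i, (φ i (b i) - φ i (a i)) = 0 := by
      rw [Finset.sum_sub_distrib]
      rw [sub_eq_zero]
      exact heq
    linarith
  have hge : lam ≤ (star xk ⬝ᵥ B *ᵥ xk).re := by
    have hsplit : ∑ i, h i (a i) * b i
        = ∑ i, h i (a i) * a i + ∑ i, h i (a i) * (b i - a i) := by
      rw [← Finset.sum_add_distrib]
      exact Finset.sum_congr rfl fun i _ => by ring
    rw [hrxk, hlam]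
    linarith
  -- spectral decomposition
  set U : Matrix (Fin n) (Fin n) ℂ := ↑(hher.eigenvectorUnitary) with hU
  set d : Fin n → ℝ := hher.eigenvalues with hd
  set D : Matrix (Fin n) (Fin n) ℂ := Matrix.diagonal (RCLike.ofReal ∘ d) with hD
  have hUsU : U * star U = 1 := Matrix.mem_unitaryGroup_iff.mp (hher.eigenvectorUnitary).2
  have hsUU : star U * U = 1 := Matrix.mem_unitaryGroup_iff'.mp (hher.eigenvectorUnitary).2
  set c : Fin n → ℂ := (star U) *ᵥ xk with hc
  have hUc : U *ᵥ c = xk := by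
    rw [hc, Matrix.mulVec_mulVec, hUsU, Matrix.one_mulVec]
  have hBxk : B *ᵥ xk = U *ᵥ (D *ᵥ c) := by
    conv_lhs => rw [hher.spectral_theorem, Unitary.conjStarAlgAut_apply]
    rw [hc, ← Matrix.mulVec_mulVec, ← Matrix.mulVec_mulVec]
  have hdotU : ∀ v w : Fin n → ℂ, star (U *ᵥ v) ⬝ᵥ (U *ᵥ w) = star v ⬝ᵥ w := by
    intro v w
    rw [Matrix.star_mulVec, Matrix.dotProduct_mulVec, Matrix.vecMul_vecMul,
      show Uᴴ * U = 1 by rw [← Matrix.star_eq_conjTranspose]; exact hsUU,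
      Matrix.vecMul_one]
  have hre : ∀ z : ℂ, ((starRingEnd ℂ) z * z).re = Complex.normSq z := fun z => by
    simp [Complex.mul_re, Complex.normSq_apply, Complex.conj_re, Complex.conj_im]
  set ns : Fin n → ℝ := fun i => Complex.normSq (c i) with hns
  have hDiag : star c ⬝ᵥ (D *ᵥ c) = ∑ i, (d i : ℂ) * (starRingEnd ℂ (c i) * c i) := by
    rw [dotProduct]
    refine Finset.sum_congr rfl fun i _ => ?_
    rw [Matrix.mulVec_diagonal]
    simp only [Complex.star_def, Pi.star_apply, Function.comp_apply]
    show _ * ((d i : ℂ) * c i) = _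
    ring
  have h1 : (star xk ⬝ᵥ B *ᵥ xk).re = ∑ i, d i * ns i := by
    rw [hBxk, ← hUc, hdotU, hDiag]
    rw [Complex.re_sum]
    refine Finset.sum_congr rfl fun i _ => ?_
    rw [Complex.re_ofReal_mul, hre]
  have h2 : ∑ i, ns i = 1 := by
    have hcc : star c ⬝ᵥ c = 1 := by
      rw [← hdotU c c, hUc]
      exact hxk
    have : (star c ⬝ᵥ c).re = 1 := by rw [hcc]; simp
    rw [dotProduct, Complex.re_sum] at this
    rw [← this]
    refine Finset.sum_congr rfl fun i _ => ?_
    show Complex.normSq (c i) = _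
    rw [← hre (c i)]
    simp [Complex.star_def]
  -- eigenvalues bounded by lam
  have hdle : ∀ i, d i ≤ lam := by
    intro i
    have hv := hher.mulVec_eigenvectorBasis i
    refine hmax (d i) ⇑(hher.eigenvectorBasis i) ?_ ?_
    · intro hzero
      exact hher.eigenvectorBasis.orthonormal.ne_zero i (by ext j; exact congrFun hzero j)
    · show B *ᵥ _ = _
      rw [hv]
      funext j
      simp [Complex.real_smul]
      exact Or.inl rfl
  -- equality case
  have hzero : ∀ i, (lam - d i) * ns i = 0 := by
    have hnn : ∀ i ∈ Finset.univ, 0 ≤ (lam - d i) * ns i := fun i _ =>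
      mul_nonneg (by linarith [hdle i]) (Complex.normSq_nonneg _)
    have hsum0 : ∑ i, (lam - d i) * ns i ≤ 0 := by
      have hexp : ∑ i, (lam - d i) * ns i = lam * (∑ i, ns i) - ∑ i, d i * ns i := by
        rw [Finset.mul_sum, ← Finset.sum_sub_distrib]
        exact Finset.sum_congr rfl fun i _ => by ring
      rw [hexp, h2, ← h1]
      linarith
    intro i
    exact (Finset.sum_eq_zero_iff_of_nonneg hnn).mp
      (le_antisymm hsum0 (Finset.sum_nonneg hnn)) i (Finset.mem_univ i)
  have hDc : D *ᵥ c = (lam : ℂ) • c := by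
    funext i
    rw [Matrix.mulVec_diagonal]
    show (RCLike.ofReal ∘ d) i * c i = ((lam : ℂ) • c) i
    rcases mul_eq_zero.mp (hzero i) with hcase | hcase
    · have hdi : d i = lam := by linarith
      simp [hdi]
    · have : c i = 0 := Complex.normSq_eq_zero.mp hcase
      simp [this]
  show B *ᵥ xk = _
  rw [hBxk, hDc, Matrix.mulVec_smul, hUc]
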